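/- For every n ≥ 1, there exists a 231-avoiding point set P of 2^n − 1 points on the integer grid [2^n−1]² such that the sum of L∞ nearest-neighbor distances of P is at least n·2^{n−2}. -/

import Mathlib

open scoped ENNReal

open List

def ptsL : ℕ → List ((ℤ × ℤ) × ℕ)
  | 0 => []
  | n+1 => ((1, 2^n), n+1) ::
      ((ptsL n).map (fun p => ((p.1.1 + 1, p.1.2), p.2)) ++
       (ptsL n).map (fun p => ((p.1.1 + 2^n, p.1.2 + 2^n), p.2)))

lemma two_pow_int (n : ℕ) : (1:ℤ) ≤ 2^n := by
  have := Nat.one_le_two_pow (n := n); exact_mod_cast this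

lemma two_pow_mono {i j : ℕ} (h : i ≤ j) : (2:ℤ)^i ≤ 2^j :=
  pow_le_pow_right₀ (by norm_num) h

lemma ptsL_length (n : ℕ) : (ptsL n).length = 2^n - 1 := by
  induction n with
  | zero => simp [ptsL]
  | succ n ih => simp [ptsL, ih, pow_succ]; have := Nat.one_le_two_pow (n := n); omega

lemma ptsL_bounds (n : ℕ) : ∀ p ∈ ptsL n,
    1 ≤ p.1.1 ∧ p.1.1 ≤ 2^n - 1 ∧ 1 ≤ p.1.2 ∧ p.1.2 ≤ 2^n - 1 ∧
    1 ≤ p.2 ∧ p.2 ≤ n ∧ (2:ℤ)^(p.2-1) ≤ p.1.2 ∧ p.1.2 ≤ 2^n - 2^(p.2-1) := by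
  induction n with
  | zero => simp [ptsL]
  | succ n ih =>
    intro p hp
    have h2 : (1:ℤ) ≤ 2^n := two_pow_int n
    have hpow : (2:ℤ)^(n+1) = 2^n * 2 := by ring
    rcases List.mem_cons.1 hp with rfl | hp
    · refine ⟨le_refl _, by simp only; linarith, by simp only; linarith, by simp only; linarith,
        by omega, le_refl _, ?_, ?_⟩ <;> simp only [Nat.add_sub_cancel] <;> linarith
    · rcases List.mem_append.1 hp with hp | hp <;>
        obtain ⟨⟨⟨x, y⟩, k⟩, hq, rfl⟩ := List.mem_map.1 hp <;>
        obtain ⟨b1, b2, b3, b4, b5, b6, b7, b8⟩ := ih _ hq <;>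
        simp only at b1 b2 b3 b4 b5 b6 b7 b8 ⊢ <;>
        have hk : (2:ℤ)^(k-1) ≤ 2^n := by
          apply pow_le_pow_right₀ (by norm_num); omega
      · exact ⟨by linarith, by linarith, by linarith, by linarith, b5, by omega, b7, by linarith⟩
      · exact ⟨by linarith, by linarith, by linarith, by linarith, b5, by omega, by linarith, by linarith⟩

lemma ptsL_up (n : ℕ) : ∀ p ∈ ptsL n, (2:ℤ)^(n-1) < p.1.2 → (2:ℤ)^(n-1) < p.1.1 := by
  induction n with
  | zero => simp [ptsL]
  | succ n ih =>
    intro p hp hy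
    have h2 : (1:ℤ) ≤ 2^n := two_pow_int n
    simp only [Nat.add_sub_cancel] at hy ⊢
    rcases List.mem_cons.1 hp with rfl | hp
    · simp only at hy; linarith
    · rcases List.mem_append.1 hp with hp | hp <;>
        obtain ⟨⟨⟨x, y⟩, k⟩, hq, rfl⟩ := List.mem_map.1 hp <;>
        obtain ⟨b1, b2, b3, b4, -, -, -, -⟩ := ptsL_bounds n _ hq <;>
        simp only at b1 b2 b3 b4 hy ⊢ <;> linarith

lemma ptsL_pairwise (n : ℕ) :
    (ptsL n).Pairwise (fun p q => p.1.1 < q.1.1 ∧ p.1.2 ≠ q.1.2) := by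
  induction n with
  | zero => simp [ptsL]
  | succ n ih =>
    have h2 : (1:ℤ) ≤ 2^n := two_pow_int n
    rw [ptsL, pairwise_cons]
    constructor
    · intro q hq
      rcases List.mem_append.1 hq with hp | hp <;>
        obtain ⟨⟨⟨x, y⟩, k⟩, hq', rfl⟩ := List.mem_map.1 hp <;>
        obtain ⟨b1, b2, b3, b4, -, -, -, -⟩ := ptsL_bounds n _ hq' <;>
        simp only at b1 b2 b3 b4 ⊢ <;> constructor <;> omega
    · rw [pairwise_append]
      refine ⟨ih.map _ ?_, ih.map _ ?_, ?_⟩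
      · intro a b hab
        exact ⟨by simpa using hab.1, by simpa using hab.2⟩
      · intro a b hab
        exact ⟨by simpa using hab.1, by simpa using hab.2⟩
      · intro a ha b hb
        obtain ⟨⟨⟨x, y⟩, k⟩, hq', rfl⟩ := List.mem_map.1 ha
        obtain ⟨⟨⟨x', y'⟩, k'⟩, hq'', rfl⟩ := List.mem_map.1 hb
        obtain ⟨b1, b2, b3, b4, -, -, -, -⟩ := ptsL_bounds n _ hq'
        obtain ⟨c1, c2, c3, c4, -, -, -, -⟩ := ptsL_bounds n _ hq''
        simp only at *
        constructor <;> omega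

lemma ptsL_cases' {n : ℕ} {p : (ℤ × ℤ) × ℕ} (hp : p ∈ ptsL (n+1)) :
    (p.1.1 = 1 ∧ p.1.2 = 2^n ∧ p.2 = n+1) ∨
    (∃ q ∈ ptsL n, p.1.1 = q.1.1 + 1 ∧ p.1.2 = q.1.2 ∧ p.2 = q.2 ∧
      2 ≤ p.1.1 ∧ p.1.1 ≤ 2^n ∧ 1 ≤ p.1.2 ∧ p.1.2 ≤ 2^n - 1) ∨
    (∃ q ∈ ptsL n, p.1.1 = q.1.1 + 2^n ∧ p.1.2 = q.1.2 + 2^n ∧ p.2 = q.2 ∧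
      2^n + 1 ≤ p.1.1 ∧ 2^n + 1 ≤ p.1.2 ∧ p.1.2 ≤ 2^(n+1) - 1) := by
  rcases List.mem_cons.1 hp with h | h
  · left; rw [h]; exact ⟨rfl, rfl, rfl⟩
  · rcases List.mem_append.1 h with h | h <;>
      obtain ⟨q, hq, rfl⟩ := List.mem_map.1 h <;>
      obtain ⟨b1, b2, b3, b4, -, -, -, -⟩ := ptsL_bounds n q hq
    · right; left
      refine ⟨q, hq, rfl, rfl, rfl, ?_, ?_, ?_, ?_⟩ <;> dsimp only <;> omega
    · right; right
      have : (2:ℤ)^(n+1) = 2*2^n := by ring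
      refine ⟨q, hq, rfl, rfl, rfl, ?_, ?_, ?_⟩ <;> dsimp only <;> omega

lemma ptsL_avoid (n : ℕ) : ∀ p ∈ ptsL n, ∀ q ∈ ptsL n, ∀ r ∈ ptsL n,
    p.1.1 < q.1.1 → q.1.1 < r.1.1 → r.1.2 < p.1.2 → ¬ p.1.2 < q.1.2 := by
  induction n with
  | zero => simp [ptsL]
  | succ n ih =>
    intro p hp q hq r hr h1 h2 h3 h4
    have h2n : (1:ℤ) ≤ 2^n := two_pow_int n
    rcases ptsL_cases' hp with ⟨f1, f2, -⟩ | ⟨a, ha, f1, f2, -, f3, f4, f5, f6⟩ |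
        ⟨a, ha, f1, f2, -, f3, f4, -⟩ <;>
      rcases ptsL_cases' hq with ⟨g1, g2, -⟩ | ⟨b, hb, g1, g2, -, g3, g4, g5, g6⟩ |
        ⟨b, hb, g1, g2, -, g3, g4, -⟩ <;>
      rcases ptsL_cases' hr with ⟨e1, e2, -⟩ | ⟨c, hc, e1, e2, -, e3, e4, e5, e6⟩ |
        ⟨c, hc, e1, e2, -, e3, e4, -⟩ <;>
      try omega
    all_goals exact ih a ha b hb c hc (by omega) (by omega) (by omega) (by omega)

lemma ptsL_sep (n : ℕ) : ∀ p ∈ ptsL n, ∀ q ∈ ptsL n, p.1 ≠ q.1 →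
    (2:ℤ)^(p.2 - 2) ≤ |p.1.1 - q.1.1| ∨ (2:ℤ)^(p.2 - 2) ≤ |p.1.2 - q.1.2| := by
  induction n with
  | zero => simp [ptsL]
  | succ n ih =>
    intro p hp q hq hne
    have h2n : (1:ℤ) ≤ 2^n := two_pow_int n
    have h2n1 : (1:ℤ) ≤ 2^(n-1) := two_pow_int (n-1)
    have hmn : (2:ℤ)^(n-1) ≤ 2^n := two_pow_mono (by omega)
    rcases ptsL_cases' hp with ⟨f1, f2, f0⟩ | ⟨a, ha, f1, f2, f0, f3, f4, f5, f6⟩ |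
        ⟨a, ha, f1, f2, f0, f3, f4, f7⟩
    · -- p is root, exponent = n-1
      have he : p.2 - 2 = n - 1 := by omega
      rw [he]
      rcases ptsL_cases' hq with ⟨g1, g2, g0⟩ | ⟨b, hb, g1, g2, g0, g3, g4, g5, g6⟩ |
          ⟨b, hb, g1, g2, g0, g3, g4, g7⟩
      · exact absurd (Prod.ext_iff.mpr ⟨by omega, by omega⟩) hne
      · obtain ⟨c1, c2, c3, c4, c5, c6, c7, c8⟩ := ptsL_bounds n b hb
        have hn1 : 1 ≤ n := by omega
        have hp2 : (2:ℤ)^n = 2^(n-1) * 2 := by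
          rw [← pow_succ]; congr 1; omega
        by_cases hy : (2:ℤ)^(n-1) < q.1.2
        · have hx := ptsL_up n b hb (by omega)
          exact Or.inl (le_abs.mpr (Or.inr (by omega)))
        · exact Or.inr (le_abs.mpr (Or.inl (by omega)))
      · obtain ⟨c1, c2, c3, c4, c5, c6, c7, c8⟩ := ptsL_bounds n b hb
        exact Or.inl (le_abs.mpr (Or.inr (by omega)))
    · -- p in bottom copy, level = a.2
      obtain ⟨a1, a2, a3, a4, a5, a6, a7, a8⟩ := ptsL_bounds n a ha
      rw [f0]
      have hm1 : (2:ℤ)^(a.2-2) ≤ 2^(a.2-1) := two_pow_mono (by omega)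
      rcases ptsL_cases' hq with ⟨g1, g2, g0⟩ | ⟨b, hb, g1, g2, g0, g3, g4, g5, g6⟩ |
          ⟨b, hb, g1, g2, g0, g3, g4, g7⟩
      · exact Or.inr (le_abs.mpr (Or.inr (by omega)))
      · have hne' : a.1 ≠ b.1 := by
          intro h
          have hx := congrArg Prod.fst h
          have hy := congrArg Prod.snd h
          exact hne (Prod.ext_iff.mpr ⟨by omega, by omega⟩)
        rw [show p.1.1 - q.1.1 = a.1.1 - b.1.1 by omega,
            show p.1.2 - q.1.2 = a.1.2 - b.1.2 by omega]
        exact ih a ha b hb hne'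
      · exact Or.inr (le_abs.mpr (Or.inr (by omega)))
    · -- p in top copy
      obtain ⟨a1, a2, a3, a4, a5, a6, a7, a8⟩ := ptsL_bounds n a ha
      rw [f0]
      have hm1 : (2:ℤ)^(a.2-2) ≤ 2^(a.2-1) := two_pow_mono (by omega)
      have hm2 : (2:ℤ)^(a.2-2) ≤ 2^n := two_pow_mono (by omega)
      rcases ptsL_cases' hq with ⟨g1, g2, g0⟩ | ⟨b, hb, g1, g2, g0, g3, g4, g5, g6⟩ |
          ⟨b, hb, g1, g2, g0, g3, g4, g7⟩
      · exact Or.inl (le_abs.mpr (Or.inl (by omega)))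
      · exact Or.inr (le_abs.mpr (Or.inl (by omega)))
      · have hne' : a.1 ≠ b.1 := by
          intro h
          have hx := congrArg Prod.fst h
          have hy := congrArg Prod.snd h
          exact hne (Prod.ext_iff.mpr ⟨by omega, by omega⟩)
        rw [show p.1.1 - q.1.1 = a.1.1 - b.1.1 by omega,
            show p.1.2 - q.1.2 = a.1.2 - b.1.2 by omega]
        exact ih a ha b hb hne'

lemma ptsL_sum (n : ℕ) : n * 2^(n-2) ≤ ((ptsL n).map (fun p => 2^(p.2 - 2))).sum := by
  induction n with
  | zero => simp [ptsL]
  | succ n ih =>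
    rw [ptsL]
    simp only [List.map_cons, List.map_append, List.map_map, List.sum_cons, List.sum_append,
      Function.comp_def]
    have h1 : 2^(n-1) ≤ 2*2^(n-2) := by
      rcases Nat.lt_or_ge n 2 with h | h
      · interval_cases n <;> norm_num
      · rw [show n-1 = (n-2)+1 by omega, pow_succ]
        omega
    have h2 : n * 2^(n-1) ≤ n * (2*2^(n-2)) := Nat.mul_le_mul_left n h1
    have h3 : (n+1) * 2^(n+1-2) = 2^(n-1) + n * 2^(n-1) := by
      rw [show n+1-2 = n-1 by omega]; ring
    have h4 : 2^(n+1-2) = 2^(n-1) := by rw [show n+1-2 = n-1 by omega]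
    have h5 : n*(2*2^(n-2)) = 2*(n*2^(n-2)) := by ring
    linarith


/-- For every `n ≥ 1` there is a 231-avoiding point set of `2^n - 1` points
on the integer grid `[2^n - 1]²` (in general position) whose sum of L∞ nearest-neighbor
distances is at least `n · 2^(n-2)`. -/
theorem exists_231_avoiding_grid_set_with_large_nn (n : ℕ) (hn : 1 ≤ n) :
    ∃ P : Fin (2 ^ n - 1) → ℤ × ℤ,
      Function.Injective P ∧
      (∀ i, (P i).1 ∈ Set.Icc (1 : ℤ) (2 ^ n - 1) ∧ (P i).2 ∈ Set.Icc (1 : ℤ) (2 ^ n - 1)) ∧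
      (∀ i j, i ≠ j → (P i).1 ≠ (P j).1 ∧ (P i).2 ≠ (P j).2) ∧
      (¬ ∃ a b c : Fin (2 ^ n - 1), (P a).1 < (P b).1 ∧ (P b).1 < (P c).1 ∧
        (P c).2 < (P a).2 ∧ (P a).2 < (P b).2) ∧
      ((n * 2 ^ (n - 2) : ℕ) : ℝ≥0∞) ≤
        ∑ a : Fin (2 ^ n - 1), ⨅ (b : Fin (2 ^ n - 1)) (_ : b ≠ a),
          ((max ((P a).1 - (P b).1).natAbs ((P a).2 - (P b).2).natAbs : ℕ) : ℝ≥0∞) := by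
  have hlen : (ptsL n).length = 2^n - 1 := ptsL_length n
  set l := ptsL n with hl
  have hpw := (List.pairwise_iff_get).1 (ptsL_pairwise n)
  have hne3 : ∀ i j : Fin (2^n - 1), i ≠ j →
      (l.get (Fin.cast hlen.symm i)).1.1 ≠ (l.get (Fin.cast hlen.symm j)).1.1 ∧
      (l.get (Fin.cast hlen.symm i)).1.2 ≠ (l.get (Fin.cast hlen.symm j)).1.2 := by
    intro i j hij
    rcases lt_trichotomy (Fin.cast hlen.symm i) (Fin.cast hlen.symm j) with h | h | h
    · obtain ⟨h1, h2⟩ := hpw _ _ h; exact ⟨ne_of_lt h1, h2⟩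
    · exact absurd (Fin.ext (by simpa using congrArg Fin.val h)) hij
    · obtain ⟨h1, h2⟩ := hpw _ _ h; exact ⟨(ne_of_lt h1).symm, (h2).symm⟩
  refine ⟨fun i => (l.get (Fin.cast hlen.symm i)).1, ?_, ?_, ?_, ?_, ?_⟩
  · intro i j h
    by_contra hij
    exact (hne3 i j hij).1 (congrArg Prod.fst h)
  · intro i
    obtain ⟨b1, b2, b3, b4, -, -, -, -⟩ := ptsL_bounds n _ (l.get_mem _)
    exact ⟨Set.mem_Icc.mpr ⟨b1, b2⟩, Set.mem_Icc.mpr ⟨b3, b4⟩⟩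
  · exact hne3
  · rintro ⟨a, b, c, h1, h2, h3, h4⟩
    exact ptsL_avoid n _ (l.get_mem _) _ (l.get_mem _) _ (l.get_mem _) h1 h2 h3 h4
  · have key : ∀ a b : Fin (2^n - 1), b ≠ a →
        (2^((l.get (Fin.cast hlen.symm a)).2 - 2) : ℕ) ≤
          max ((l.get (Fin.cast hlen.symm a)).1.1 - (l.get (Fin.cast hlen.symm b)).1.1).natAbs
              ((l.get (Fin.cast hlen.symm a)).1.2 - (l.get (Fin.cast hlen.symm b)).1.2).natAbs := by
      intro a b hb
      have hpq : (l.get (Fin.cast hlen.symm a)).1 ≠ (l.get (Fin.cast hlen.symm b)).1 := by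
        intro h
        exact (hne3 a b (Ne.symm hb)).1 (congrArg Prod.fst h)
      rcases ptsL_sep n _ (l.get_mem _) _ (l.get_mem _) hpq with h | h <;>
        rw [Int.abs_eq_natAbs] at h
      · exact le_max_of_le_left (by exact_mod_cast h)
      · exact le_max_of_le_right (by exact_mod_cast h)
    calc ((n * 2 ^ (n - 2) : ℕ) : ℝ≥0∞)
        ≤ (((l.map (fun p => 2^(p.2 - 2))).sum : ℕ) : ℝ≥0∞) := by
          exact Nat.cast_le.mpr (ptsL_sum n)
      _ = ((∑ i : Fin l.length, 2^((l.get i).2 - 2) : ℕ) : ℝ≥0∞) := by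
          rw [← Fin.sum_univ_fun_getElem l (fun p => 2^(p.2 - 2))]
          simp [List.get_eq_getElem]
      _ = ((∑ a : Fin (2^n - 1), 2^((l.get (Fin.cast hlen.symm a)).2 - 2) : ℕ) : ℝ≥0∞) := by
          congr 1
          exact (Fintype.sum_equiv (finCongr hlen.symm)
            (fun a => 2^((l.get (Fin.cast hlen.symm a)).2 - 2))
            (fun i => 2^((l.get i).2 - 2)) (fun a => rfl)).symm
      _ = ∑ a : Fin (2^n - 1), ((2^((l.get (Fin.cast hlen.symm a)).2 - 2) : ℕ) : ℝ≥0∞) := by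
          push_cast; rfl
      _ ≤ _ := by
          refine Finset.sum_le_sum fun a _ => ?_
          refine le_iInf fun b => le_iInf fun hb => ?_
          exact Nat.cast_le.mpr (key a b hb)
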